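/- Let 1 ≤ k₋ < k₊ and n ≥ 1 be integers, and let p be a prime with p ≡ 1 (mod k₊+k₋). Suppose there is no splitting ℤ_{(k₊+k₋)n+1} = (M,S) with multiplier set M = [-k₋,k₊]* = {m ∈ ℤ : -k₋ ≤ m ≤ k₊, m ≠ 0} and |S| = n. Then for every positive integer i, setting n' = (((k₊+k₋)n+1)·pⁱ − 1)/(k₊+k₋) (which is an integer since p ≡ 1 (mod k₊+k₋)), there is no splitting ℤ_{(k₊+k₋)n'+1} = (M,S') with the same multiplier set M and |S'| = n'. (Equivalently, if the (k₊,k₋,n)-quasi-cross does not lattice tile ℝⁿ, then the (k₊,k₋,n')-quasi-cross does not lattice tile ℝ^{n'}.) -/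

import Mathlib

/-- `(M, S)` is a splitting of `ℤ_q`: `M ⊆ ℤ \ {0}`, and the products `m·s`
(for `m ∈ M`, `s ∈ S`) are pairwise distinct and cover exactly the nonzero
elements of `ZMod q`. -/
def IsSplitting (q : ℕ) (M : Finset ℤ) (S : Finset (ZMod q)) : Prop :=
  (0 : ℤ) ∉ M ∧
  Set.InjOn (fun p : ℤ × ZMod q => (p.1 : ZMod q) * p.2) ↑(M ×ˢ S) ∧
  (fun p : ℤ × ZMod q => (p.1 : ZMod q) * p.2) '' ↑(M ×ˢ S) = {a : ZMod q | a ≠ 0}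

lemma splitting_card (q : ℕ) [NeZero q] (M : Finset ℤ) (S : Finset (ZMod q))
    (h : IsSplitting q M S) : M.card * S.card = q - 1 := by
  obtain ⟨h0, hinj, himg⟩ := h
  have himg' : Finset.image (fun p : ℤ × ZMod q => (p.1 : ZMod q) * p.2) (M ×ˢ S)
      = Finset.univ.erase 0 := by
    apply Finset.coe_injective
    rw [Finset.coe_image, himg]
    ext a
    simp
  have h1 := Finset.card_image_of_injOn hinj
  rw [himg'] at h1
  rw [Finset.card_erase_of_mem (Finset.mem_univ _), Finset.card_univ, ZMod.card] at h1
  rw [Finset.card_product] at h1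
  omega

lemma transfer (q t N : ℕ) (hN : N = q * t) (hq : 0 < q) (ht : 0 < t)
    (M : Finset ℤ) (hcop : ∀ m ∈ M, Nat.Coprime t m.natAbs)
    (S' : Finset (ZMod N)) (h : IsSplitting N M S') :
    ∃ S : Finset (ZMod q), IsSplitting q M S := by
  subst hN
  have hqt : 0 < q * t := Nat.mul_pos hq ht
  haveI : NeZero q := ⟨hq.ne'⟩
  haveI : NeZero (q * t) := ⟨hqt.ne'⟩
  obtain ⟨h0, hinj, himg⟩ := h
  set f : ℤ × ZMod (q * t) → ZMod (q * t) := fun p => (p.1 : ZMod (q * t)) * p.2 with hf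
  -- the embedding ι : ZMod q → ZMod (q*t)
  set ι : ZMod q → ZMod (q * t) := fun a => ((t * a.val : ℕ) : ZMod (q * t)) with hι
  have hι_val : ∀ a : ZMod q, (ι a).val = t * a.val := by
    intro a
    apply ZMod.val_cast_of_lt
    calc t * a.val < t * q := (Nat.mul_lt_mul_left ht).mpr (ZMod.val_lt a)
      _ = q * t := Nat.mul_comm t q
  have hι_inj : Function.Injective ι := by
    intro a b hab
    have := congrArg ZMod.val hab
    rw [hι_val, hι_val] at this
    have : a.val = b.val := Nat.eq_of_mul_eq_mul_left ht this
    exact ZMod.val_injective _ this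
  have hι_zero : ι 0 = 0 := by simp [hι]
  -- congruence facts
  have hval_int : ∀ (m : ℤ) (a : ZMod q),
      (((m : ZMod q) * a).val : ℤ) ≡ m * (a.val : ℤ) [ZMOD (q : ℤ)] := by
    intro m a
    have h1 : ((((m : ZMod q) * a).val : ℤ) : ZMod q) = ((m * (a.val : ℤ) : ℤ) : ZMod q) := by
      push_cast
      simp [ZMod.natCast_val, ZMod.cast_id]
    exact (ZMod.intCast_eq_intCast_iff _ _ _).mp h1
  have hmul : ∀ (m : ℤ) (a : ZMod q), ι ((m : ZMod q) * a) = (m : ZMod (q * t)) * ι a := by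
    intro m a
    have h1 : ((t : ℤ) * (((m : ZMod q) * a).val : ℤ)) ≡ m * ((t * a.val : ℕ) : ℤ)
        [ZMOD ((q * t : ℕ) : ℤ)] := by
      obtain ⟨c, hc⟩ := Int.ModEq.dvd (hval_int m a)
      rw [Int.modEq_iff_dvd]
      refine ⟨c, ?_⟩
      push_cast
      linear_combination (t : ℤ) * hc
    have e1 : ι ((m : ZMod q) * a) = (((t * ((m : ZMod q) * a).val : ℕ) : ℤ) : ZMod (q * t)) := by
      simp [hι]
    have e2 : (((t * ((m : ZMod q) * a).val : ℕ) : ℤ) : ZMod (q * t))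
        = ((m * ((t * a.val : ℕ) : ℤ) : ℤ) : ZMod (q * t)) := by
      rw [ZMod.intCast_eq_intCast_iff]
      push_cast
      push_cast at h1
      exact h1
    have e3 : ((m * ((t * a.val : ℕ) : ℤ) : ℤ) : ZMod (q * t)) = (m : ZMod (q * t)) * ι a := by
      simp [hι]
    exact e1.trans (e2.trans e3)
  -- key divisibility lemma
  have hkey : ∀ m ∈ M, ∀ x : ZMod (q * t), t ∣ ((m : ZMod (q * t)) * x).val → t ∣ x.val := by
    intro m hm x hdvd
    have h1 : ((((m : ZMod (q * t)) * x).val : ℤ)) ≡ m * (x.val : ℤ) [ZMOD ((q * t : ℕ) : ℤ)] := by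
      have : ((((m : ZMod (q * t)) * x).val : ℤ) : ZMod (q * t))
          = ((m * (x.val : ℤ) : ℤ) : ZMod (q * t)) := by
        push_cast
        simp [ZMod.natCast_val, ZMod.cast_id]
      exact (ZMod.intCast_eq_intCast_iff _ _ _).mp this
    have h2 : (t : ℤ) ∣ m * (x.val : ℤ) - (((m : ZMod (q * t)) * x).val : ℤ) := by
      refine dvd_trans ?_ (Int.ModEq.dvd h1)
      exact ⟨q, by push_cast; ring⟩
    have h3 : (t : ℤ) ∣ m * (x.val : ℤ) := by
      obtain ⟨d, hd⟩ := hdvd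
      have hw : (t : ℤ) ∣ ((((m : ZMod (q * t)) * x).val : ℤ)) := ⟨d, by exact_mod_cast hd⟩
      have := dvd_add h2 hw
      simpa using this
    have h4 : t ∣ m.natAbs * x.val := by
      have h4' := Int.natAbs_dvd_natAbs.mpr h3
      rwa [Int.natAbs_mul, Int.natAbs_natCast, Int.natAbs_natCast] at h4'
    exact Nat.Coprime.dvd_of_dvd_mul_left (hcop m hm) h4
  -- construct the splitting of ZMod q
  classical
  set g : ZMod (q * t) → ZMod q := fun x => ((x.val / t : ℕ) : ZMod q) with hg
  have hιg : ∀ x : ZMod (q * t), t ∣ x.val → ι (g x) = x := by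
    intro x hx
    have hlt : x.val / t < q := by
      rw [Nat.div_lt_iff_lt_mul ht]
      exact ZMod.val_lt x
    have : (g x).val = x.val / t := by
      rw [hg]; exact ZMod.val_cast_of_lt hlt
    show ((t * (g x).val : ℕ) : ZMod (q * t)) = x
    rw [this, Nat.mul_div_cancel' hx]
    exact ZMod.natCast_rightInverse x
  refine ⟨(S'.filter (fun x => t ∣ x.val)).image g, h0, ?_, ?_⟩
  · -- injectivity
    rintro ⟨m1, a1⟩ hmem1 ⟨m2, a2⟩ hmem2 heq
    simp only [Finset.coe_product, Set.mem_prod, Finset.mem_coe, Finset.mem_image,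
      Finset.mem_filter] at hmem1 hmem2
    obtain ⟨hm1, x1, ⟨hx1S, hx1d⟩, hx1⟩ := hmem1
    obtain ⟨hm2, x2, ⟨hx2S, hx2d⟩, hx2⟩ := hmem2
    replace hx1 : g x1 = a1 := hx1
    replace hx2 : g x2 = a2 := hx2
    simp only at heq
    have heq' : f (m1, x1) = f (m2, x2) := by
      have : ι ((m1 : ZMod q) * a1) = ι ((m2 : ZMod q) * a2) := by rw [heq]
      rw [hmul, hmul, ← hx1, ← hx2, hιg x1 hx1d, hιg x2 hx2d] at this
      exact this
    have h12 : (m1, x1) = (m2, x2) := hinj (by simp [hm1, hx1S]) (by simp [hm2, hx2S]) heq'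
    have he1 : m1 = m2 := congrArg Prod.fst h12
    have he2 : x1 = x2 := congrArg Prod.snd h12
    exact Prod.ext he1 (by rw [← hx1, ← hx2, he2])
  · -- image equals nonzero elements
    ext b
    simp only [Set.mem_image, Finset.coe_product, Set.mem_prod, Finset.mem_coe,
      Finset.mem_image, Finset.mem_filter, Set.mem_setOf_eq]
    constructor
    · rintro ⟨⟨m, a⟩, ⟨hm, x, ⟨hxS, hxd⟩, hxa⟩, hba⟩
      replace hxa : g x = a := hxa
      replace hm : m ∈ M := hm
      simp only at hba
      subst hba
      intro hzero
      have : f (m, x) = 0 := by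
        have : ι ((m : ZMod q) * a) = ι 0 := by rw [hzero]
        rw [hmul, ← hxa, hιg x hxd, hι_zero] at this
        exact this
      have hx0 : f (m, x) ≠ 0 := by
        have : f (m, x) ∈ f '' ↑(M ×ˢ S') := ⟨(m, x), by simp [hm, hxS], rfl⟩
        rw [himg] at this
        exact this
      exact hx0 this
    · intro hb
      have hιb : ι b ≠ 0 := fun hc => hb (hι_inj (hc.trans hι_zero.symm))
      have : ι b ∈ f '' ↑(M ×ˢ S') := by rw [himg]; exact hιb
      obtain ⟨⟨m, x⟩, hmx, hfx⟩ := this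
      simp only [Finset.coe_product, Set.mem_prod, Finset.mem_coe] at hmx
      have hxd : t ∣ x.val := by
        apply hkey m hmx.1
        have : (ι b).val = t * b.val := hι_val b
        rw [show (m : ZMod (q * t)) * x = ι b from hfx, this]
        exact ⟨b.val, rfl⟩
      refine ⟨(m, g x), ⟨hmx.1, x, ⟨hmx.2, hxd⟩, rfl⟩, ?_⟩
      simp only
      apply hι_inj
      rw [hmul, hιg x hxd]
      exact hfx

theorem stmt_17 (kp km n : ℕ) (hkm : 1 ≤ km) (hk : km < kp) (hn : 1 ≤ n)
    (p : ℕ) (hp : Nat.Prime p) (hp1 : p % (kp + km) = 1)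
    (hno : ¬ ∃ S : Finset (ZMod ((kp + km) * n + 1)),
        IsSplitting ((kp + km) * n + 1)
          ((Finset.Icc (-(km : ℤ)) (kp : ℤ)).erase 0) S ∧ S.card = n) :
    ∀ i : ℕ, 1 ≤ i → ∀ n' : ℕ,
      (kp + km) * n' = ((kp + km) * n + 1) * p ^ i - 1 →
      ¬ ∃ S' : Finset (ZMod ((kp + km) * n' + 1)),
          IsSplitting ((kp + km) * n' + 1)
            ((Finset.Icc (-(km : ℤ)) (kp : ℤ)).erase 0) S' ∧ S'.card = n' := by
  intro i hi n' hn'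
  rintro ⟨S', hS', hcard'⟩
  have ht : 0 < p ^ i := pow_pos hp.pos i
  have hpK : kp + km + 1 ≤ p := by
    have h2 := hp.two_le
    have h3 := Nat.div_add_mod p (kp + km)
    rcases Nat.eq_zero_or_pos (p / (kp + km)) with h | h
    · rw [h, Nat.mul_zero] at h3
      omega
    · have : kp + km ≤ (kp + km) * (p / (kp + km)) := Nat.le_mul_of_pos_right _ h
      omega
  have hN : (kp + km) * n' + 1 = ((kp + km) * n + 1) * p ^ i := by
    have h1 : 1 ≤ ((kp + km) * n + 1) * p ^ i := Nat.one_le_iff_ne_zero.mpr (by positivity)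
    omega
  have hcop : ∀ m ∈ (Finset.Icc (-(km : ℤ)) (kp : ℤ)).erase 0,
      Nat.Coprime (p ^ i) m.natAbs := by
    intro m hm
    rw [Finset.mem_erase, Finset.mem_Icc] at hm
    have hnz : m.natAbs ≠ 0 := by omega
    have hplt : m.natAbs < p := by omega
    have hnd : ¬ p ∣ m.natAbs := fun hd =>
      absurd (Nat.le_of_dvd (Nat.pos_of_ne_zero hnz) hd) (not_le.mpr hplt)
    exact Nat.Coprime.pow_left i (hp.coprime_iff_not_dvd.mpr hnd)
  obtain ⟨S, hS⟩ := transfer ((kp + km) * n + 1) (p ^ i) ((kp + km) * n' + 1) hN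
    (by omega) ht _ hcop S' hS'
  haveI : NeZero ((kp + km) * n + 1) := ⟨by omega⟩
  have hc := splitting_card ((kp + km) * n + 1) _ S hS
  have hMcard : ((Finset.Icc (-(km : ℤ)) (kp : ℤ)).erase 0).card = kp + km := by
    rw [Finset.card_erase_of_mem (by rw [Finset.mem_Icc]; constructor <;> omega)]
    rw [Int.card_Icc]
    omega
  rw [hMcard, Nat.add_sub_cancel] at hc
  exact hno ⟨S, hS, Nat.eq_of_mul_eq_mul_left (by omega) hc⟩
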